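/- If I is an ideal of Lmc(S), then E⁻(E(I)) is the smallest e-ideal containing I. In particular, every maximal ideal of Lmc(S) is an e-ideal. -/

import Mathlib

open scoped BoundedContinuousFunction
open WeakDual

/-- A semitopological semigroup: multiplication is separately continuous. -/
class SemitopologicalSemigroup (S : Type*) [TopologicalSpace S] [Mul S] : Prop where
  continuous_mul_left : ∀ s : S, Continuous fun x : S => s * x
  continuous_mul_right : ∀ s : S, Continuous fun x : S => x * s

/-- Left translate `L_s f (x) = f (s x)` as a bounded continuous function. -/
noncomputable def lTrans {S : Type*} [TopologicalSpace S] [Mul S] [SemitopologicalSemigroup S]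
    (s : S) (f : S →ᵇ ℂ) : S →ᵇ ℂ :=
  f.compContinuous ⟨fun x => s * x, SemitopologicalSemigroup.continuous_mul_left s⟩

/-- The left multiplicatively continuous functions: `f ∈ Lmc S` iff `T_μ f` is (bounded)
continuous for every character `μ` of `CB(S) = S →ᵇ ℂ` (i.e. every `μ ∈ βS`). -/
def Lmc (S : Type*) [TopologicalSpace S] [Mul S] [SemitopologicalSemigroup S] :
    Set (S →ᵇ ℂ) :=
  {f | ∀ μ : characterSpace ℂ (S →ᵇ ℂ), Continuous fun s : S => (μ (lTrans s f) : ℂ)}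

/-- `E_ε(f) = {x ∈ S : |f x| ≤ ε}`. -/
def Eset {S : Type*} [TopologicalSpace S] (ε : ℝ) (f : S →ᵇ ℂ) : Set S :=
  {x : S | ‖f x‖ ≤ ε}

/-- A zero set of `Lmc S`: `Z(f) = f⁻¹({0})` for some `f ∈ Lmc S`. -/
def IsZeroSet {S : Type*} [TopologicalSpace S] [Mul S] [SemitopologicalSemigroup S]
    (A : Set S) : Prop :=
  ∃ f ∈ Lmc S, A = {x : S | f x = 0}

/-- `E(I) = {E_ε(f) : f ∈ I, ε > 0}`. -/
def Efam {S : Type*} [TopologicalSpace S] [Mul S] [SemitopologicalSemigroup S]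
    (I : Set (S →ᵇ ℂ)) : Set (Set S) :=
  {A | ∃ f ∈ I, ∃ ε : ℝ, 0 < ε ∧ A = Eset ε f}

/-- `E⁻(𝒜) = {f ∈ Lmc S : E_ε(f) ∈ 𝒜 for all ε > 0}`. -/
def Einv {S : Type*} [TopologicalSpace S] [Mul S] [SemitopologicalSemigroup S]
    (𝒜 : Set (Set S)) : Set (S →ᵇ ℂ) :=
  {f | f ∈ Lmc S ∧ ∀ ε : ℝ, 0 < ε → Eset ε f ∈ 𝒜}

/-- A `z`-filter on `Lmc S`. -/
structure IsZFilter {S : Type*} [TopologicalSpace S] [Mul S] [SemitopologicalSemigroup S]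
    (𝒜 : Set (Set S)) : Prop where
  zero_sets : ∀ A ∈ 𝒜, IsZeroSet A
  not_empty_mem : ∅ ∉ 𝒜
  univ_mem : Set.univ ∈ 𝒜
  inter_mem : ∀ A ∈ 𝒜, ∀ B ∈ 𝒜, A ∩ B ∈ 𝒜
  superset_mem : ∀ A ∈ 𝒜, ∀ B : Set S, IsZeroSet B → A ⊆ B → B ∈ 𝒜

/-- An ideal of the algebra `Lmc S`. -/
structure IsIdealLmc {S : Type*} [TopologicalSpace S] [Mul S] [SemitopologicalSemigroup S]
    (I : Set (S →ᵇ ℂ)) : Prop where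
  subset_lmc : I ⊆ Lmc S
  zero_mem : (0 : S →ᵇ ℂ) ∈ I
  add_mem : ∀ f ∈ I, ∀ g ∈ I, f + g ∈ I
  mul_mem : ∀ f ∈ Lmc S, ∀ g ∈ I, f * g ∈ I

/-- A maximal (proper) ideal of `Lmc S`. -/
def IsMaximalIdealLmc {S : Type*} [TopologicalSpace S] [Mul S] [SemitopologicalSemigroup S]
    (M : Set (S →ᵇ ℂ)) : Prop :=
  IsIdealLmc M ∧ M ≠ Lmc S ∧ ∀ J, IsIdealLmc J → J ≠ Lmc S → M ⊆ J → J = M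

/-- An `e`-filter: a `z`-filter with `E(E⁻(𝒜)) = 𝒜`. -/
def IsEFilter {S : Type*} [TopologicalSpace S] [Mul S] [SemitopologicalSemigroup S]
    (𝒜 : Set (Set S)) : Prop :=
  IsZFilter 𝒜 ∧ Efam (Einv 𝒜) = 𝒜

/-- An `e`-ideal: an ideal with `E⁻(E(I)) = I`. -/
def IsEIdeal {S : Type*} [TopologicalSpace S] [Mul S] [SemitopologicalSemigroup S]
    (I : Set (S →ᵇ ℂ)) : Prop :=
  IsIdealLmc I ∧ Einv (Efam I) = I

/-- An `e`-ultrafilter: a maximal `e`-filter. -/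
def IsEUltrafilter {S : Type*} [TopologicalSpace S] [Mul S] [SemitopologicalSemigroup S]
    (p : Set (Set S)) : Prop :=
  IsEFilter p ∧ ∀ q, IsEFilter q → p ⊆ q → q = p

/-- The sum `p + q` of two families of zero sets: `A ∈ p + q` iff `A = E_ε(f)` for some `ε > 0`,
`f ∈ Lmc S`, with `E_δ(q, f) = {x : λ_x⁻¹(E_δ(f)) ∈ q} ∈ p` for all `δ > 0`. -/
def eAdd {S : Type*} [TopologicalSpace S] [Mul S] [SemitopologicalSemigroup S]
    (p q : Set (Set S)) : Set (Set S) :=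
  {A | ∃ ε : ℝ, 0 < ε ∧ ∃ f ∈ Lmc S, A = Eset ε f ∧
    ∀ δ : ℝ, 0 < δ → {x : S | (fun t => x * t) ⁻¹' Eset δ f ∈ q} ∈ p}

/-- The principal `e`-ultrafilter `e(a) = {E_ε(f) : f ∈ Lmc S, f a = 0, ε > 0}`. -/
def ePrinc {S : Type*} [TopologicalSpace S] [Mul S] [SemitopologicalSemigroup S]
    (a : S) : Set (Set S) :=
  {A | ∃ f ∈ Lmc S, f a = 0 ∧ ∃ ε : ℝ, 0 < ε ∧ A = Eset ε f}

section Stmt12Aux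

open BoundedContinuousFunction Polynomial

variable {S : Type*} [TopologicalSpace S]

private lemma mem_ball_of_bcf (b : S →ᵇ ℂ) (x : S) :
    b x ∈ Metric.closedBall (0 : ℂ) ‖b‖ := by
  simpa [Metric.mem_closedBall, dist_zero_right] using b.norm_coe_le_norm x

/-- `S` mapped into the closed ball of radius `‖b‖` by `b`. -/
noncomputable def ballMap (b : S →ᵇ ℂ) : C(S, (Metric.closedBall (0 : ℂ) ‖b‖ : Set ℂ)) :=
  ⟨fun x => ⟨b x, mem_ball_of_bcf b x⟩, (map_continuous b).subtype_mk _⟩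

private instance ballCompact (b : S →ᵇ ℂ) :
    CompactSpace (Metric.closedBall (0 : ℂ) ‖b‖ : Set ℂ) :=
  isCompact_iff_compactSpace.mp (isCompact_closedBall _ _)

/-- Composition `φ ∘ b` of a bounded continuous function with a continuous `φ : ℂ → ℂ`,
as a bounded continuous function. -/
noncomputable def bcomp (φ : C(ℂ, ℂ)) (b : S →ᵇ ℂ) : S →ᵇ ℂ :=
  (mkOfCompact (φ.restrict (Metric.closedBall (0 : ℂ) ‖b‖))).compContinuous (ballMap b)

lemma bcomp_apply (φ : C(ℂ, ℂ)) (b : S →ᵇ ℂ) (x : S) : bcomp φ b x = φ (b x) := rfl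

private lemma char_norm_le (μ : WeakDual.characterSpace ℂ (S →ᵇ ℂ)) (a : S →ᵇ ℂ) :
    ‖μ a‖ ≤ ‖a‖ := by
  haveI hnt : Nontrivial (S →ᵇ ℂ) :=
    ⟨1, 0, fun h => one_ne_zero (show (1 : ℂ) = 0 by rw [← map_one μ, h, map_zero])⟩
  exact spectrum.norm_le_norm_of_mem (AlgHom.apply_mem_spectrum (AlgHomClass.toAlgHom μ) a)

/-- Characters of `CB(S)` commute with continuous functional composition. -/
theorem char_bcomp (μ : WeakDual.characterSpace ℂ (S →ᵇ ℂ)) (φ : C(ℂ, ℂ)) (b : S →ᵇ ℂ) :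
    μ (bcomp φ b) = φ (μ b) := by
  set K : Set ℂ := Metric.closedBall (0 : ℂ) ‖b‖ with hKdef
  let M : (S →ᵇ ℂ) →⋆ₐ[ℂ] ℂ := { AlgHomClass.toAlgHom μ with map_star' := map_star μ }
  let T : C(K, ℂ) →⋆ₐ[ℂ] (S →ᵇ ℂ) :=
    { toFun := fun ψ => (mkOfCompact ψ).compContinuous (ballMap b)
      map_one' := by ext x; simp
      map_mul' := fun ψ χ => by ext x; simp
      map_zero' := by ext x; simp
      map_add' := fun ψ χ => by ext x; simp
      commutes' := fun r => by ext x; simp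
      map_star' := fun ψ => by ext x; simp }
  have hTnorm : ∀ ψ : C(K, ℂ), ‖T ψ‖ ≤ ‖ψ‖ := fun ψ =>
    (norm_compContinuous_le _ _).trans (le_of_eq (norm_mkOfCompact _))
  have hΘ1 : Continuous (M.comp T) :=
    AddMonoidHomClass.continuous_of_bound (M.comp T) 1 fun ψ => by
      rw [one_mul]; exact ((char_norm_le μ (T ψ)).trans (hTnorm ψ) : ‖M (T ψ)‖ ≤ ‖ψ‖)
  have hpt : (μ b : ℂ) ∈ K := by
    simpa [hKdef, Metric.mem_closedBall, dist_zero_right] using char_norm_le μ b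
  let Θ2 : C(K, ℂ) →⋆ₐ[ℂ] ℂ := ContinuousMap.evalStarAlgHom ℂ ℂ (⟨μ b, hpt⟩ : K)
  have hΘ2 : Continuous Θ2 :=
    AddMonoidHomClass.continuous_of_bound Θ2 1 fun ψ => by
      rw [one_mul]; exact (ψ.norm_coe_le_norm (⟨μ b, hpt⟩ : K) : ‖Θ2 ψ‖ ≤ ‖ψ‖)
  have hX : (M.comp T) (toContinuousMapOnAlgHom K X) = Θ2 (toContinuousMapOnAlgHom K X) := by
    have hTb : T (toContinuousMapOnAlgHom K X) = b := by
      ext x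
      simp [T, Polynomial.toContinuousMapOn, Polynomial.toContinuousMap, ballMap]
    show M (T _) = _
    rw [hTb]
    simp [Θ2, M, Polynomial.toContinuousMapOn, Polynomial.toContinuousMap]
    rfl
  have hext := ContinuousMap.starAlgHom_ext_map_X hΘ1 hΘ2 hX
  have happ := DFunLike.congr_fun hext (φ.restrict K)
  have hL : (M.comp T) (φ.restrict K) = μ (bcomp φ b) := rfl
  have hR : Θ2 (φ.restrict K) = φ (μ b) := rfl
  rw [hL, hR] at happ
  exact happ

end Stmt12Aux

section Stmt12Aux2

open BoundedContinuousFunction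

variable {S : Type*} [TopologicalSpace S] [Mul S] [SemitopologicalSemigroup S]

private lemma lTrans_apply (s : S) (f : S →ᵇ ℂ) (x : S) : lTrans s f x = f (s * x) := rfl

private lemma lTrans_mul (s : S) (f g : S →ᵇ ℂ) :
    lTrans s (f * g) = lTrans s f * lTrans s g := by ext x; rfl

private lemma lTrans_add (s : S) (f g : S →ᵇ ℂ) :
    lTrans s (f + g) = lTrans s f + lTrans s g := by ext x; rfl

private lemma lTrans_zero (s : S) : lTrans s (0 : S →ᵇ ℂ) = 0 := by ext x; rfl

private lemma lTrans_one (s : S) : lTrans s (1 : S →ᵇ ℂ) = 1 := by ext x; rfl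

private lemma lTrans_bcomp (s : S) (φ : C(ℂ, ℂ)) (b : S →ᵇ ℂ) :
    lTrans s (bcomp φ b) = bcomp φ (lTrans s b) := by ext x; rfl

lemma lmc_mul {f g : S →ᵇ ℂ} (hf : f ∈ Lmc S) (hg : g ∈ Lmc S) : f * g ∈ Lmc S := fun μ => by
  simp only [lTrans_mul, map_mul]
  exact (hf μ).mul (hg μ)

lemma lmc_add {f g : S →ᵇ ℂ} (hf : f ∈ Lmc S) (hg : g ∈ Lmc S) : f + g ∈ Lmc S := fun μ => by
  simp only [lTrans_add, map_add]
  exact (hf μ).add (hg μ)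

lemma lmc_zero : (0 : S →ᵇ ℂ) ∈ Lmc S := fun μ => by
  simp only [lTrans_zero, map_zero]
  exact continuous_const

lemma lmc_one : (1 : S →ᵇ ℂ) ∈ Lmc S := fun μ => by
  simp only [lTrans_one, map_one]
  exact continuous_const

lemma lmc_bcomp {b : S →ᵇ ℂ} (hb : b ∈ Lmc S) (φ : C(ℂ, ℂ)) : bcomp φ b ∈ Lmc S := fun μ => by
  simp only [lTrans_bcomp, char_bcomp]
  exact φ.continuous.comp (hb μ)

lemma lmc_star {b : S →ᵇ ℂ} (hb : b ∈ Lmc S) : star b ∈ Lmc S := by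
  have h : star b = bcomp ⟨fun z => star z, continuous_star⟩ b := by ext x; rfl
  rw [h]
  exact lmc_bcomp hb _

end Stmt12Aux2

section Stmt12Aux3

open BoundedContinuousFunction

variable {S : Type*} [TopologicalSpace S] [Mul S] [SemitopologicalSemigroup S]

/-- Key superset lemma: if some `E`-set of `I` is contained in `E_ε(f)` with `f ∈ Lmc S`,
then `E_ε(f) ∈ E(I)`. -/
lemma efam_superset {I : Set (S →ᵇ ℂ)} (hI : IsIdealLmc I) {g : S →ᵇ ℂ} (hg : g ∈ I)
    {δ : ℝ} (hδ : 0 < δ) {f : S →ᵇ ℂ} (hf : f ∈ Lmc S) {ε : ℝ} (hε : 0 < ε)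
    (hsub : Eset δ g ⊆ Eset ε f) : Eset ε f ∈ Efam I := by
  have hden : ∀ z : ℂ, max ‖z‖ δ ≠ 0 := fun z =>
    ne_of_gt (lt_of_lt_of_le hδ (le_max_right _ _))
  let ρ : C(ℂ, ℂ) :=
    ⟨fun z => ((δ / max ‖z‖ δ : ℝ) : ℂ),
      Complex.continuous_ofReal.comp
        (continuous_const.div (continuous_norm.max continuous_const) hden)⟩
  let σ : C(ℂ, ℂ) :=
    ⟨fun z => ((max (‖z‖ ^ 2) (ε ^ 2) : ℝ) : ℂ),
      Complex.continuous_ofReal.comp ((continuous_norm.pow 2).max continuous_const)⟩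
  refine ⟨bcomp σ f * (bcomp ρ g * g),
    hI.mul_mem _ (lmc_bcomp hf σ) _
      (hI.mul_mem _ (lmc_bcomp (hI.subset_lmc hg) ρ) _ hg), δ * ε ^ 2, by positivity, ?_⟩
  ext x
  have hgx0 : (0:ℝ) < max ‖g x‖ δ := lt_of_lt_of_le hδ (le_max_right _ _)
  have hnorm : ‖(bcomp σ f * (bcomp ρ g * g)) x‖
      = max (‖f x‖ ^ 2) (ε ^ 2) * (δ / max ‖g x‖ δ * ‖g x‖) := by
    have h1 : (0:ℝ) ≤ max (‖f x‖ ^ 2) (ε ^ 2) :=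
      le_trans (sq_nonneg _) (le_max_left _ _)
    have h2 : (0:ℝ) ≤ δ / max ‖g x‖ δ := le_of_lt (div_pos hδ hgx0)
    simp only [BoundedContinuousFunction.mul_apply, norm_mul, bcomp_apply]
    show ‖((max (‖f x‖ ^ 2) (ε ^ 2) : ℝ) : ℂ)‖ * (‖((δ / max ‖g x‖ δ : ℝ) : ℂ)‖ * ‖g x‖)
        = _
    rw [Complex.norm_real, Complex.norm_real, Real.norm_eq_abs, Real.norm_eq_abs,
      abs_of_nonneg h1, abs_of_nonneg h2]
  constructor
  · intro hx
    have hfx : ‖f x‖ ≤ ε := hx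
    show ‖(bcomp σ f * (bcomp ρ g * g)) x‖ ≤ δ * ε ^ 2
    rw [hnorm]
    have h1 : max (‖f x‖ ^ 2) (ε ^ 2) = ε ^ 2 :=
      max_eq_right (by nlinarith [norm_nonneg (f x)])
    have h2 : δ / max ‖g x‖ δ * ‖g x‖ ≤ δ := by
      rw [div_mul_eq_mul_div, div_le_iff₀ hgx0]
      have : ‖g x‖ ≤ max ‖g x‖ δ := le_max_left _ _
      nlinarith
    rw [h1]
    nlinarith [sq_nonneg ε]
  · intro hx
    show ‖f x‖ ≤ ε
    by_contra hfx
    push_neg at hfx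
    have hgx : ¬ ‖g x‖ ≤ δ := fun h => hfx.not_ge (hsub h)
    push_neg at hgx
    have hmax : max ‖g x‖ δ = ‖g x‖ := max_eq_left (le_of_lt hgx)
    have hknorm : ‖(bcomp σ f * (bcomp ρ g * g)) x‖ = ‖f x‖ ^ 2 * δ := by
      rw [hnorm, hmax, div_mul_cancel₀ _ (ne_of_gt (lt_trans hδ hgx)),
        max_eq_left (by nlinarith : ε ^ 2 ≤ ‖f x‖ ^ 2)]
    have hle : ‖(bcomp σ f * (bcomp ρ g * g)) x‖ ≤ δ * ε ^ 2 := hx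
    rw [hknorm] at hle
    have hgt : ε ^ 2 * δ < ‖f x‖ ^ 2 * δ := by nlinarith [mul_pos (mul_pos (sub_pos.mpr hfx) (by linarith : (0:ℝ) < ‖f x‖ + ε)) hδ]
    nlinarith

end Stmt12Aux3

section Stmt12Aux4

open BoundedContinuousFunction

variable {S : Type*} [TopologicalSpace S] [Mul S] [SemitopologicalSemigroup S]

lemma efam_mono {I J : Set (S →ᵇ ℂ)} (h : I ⊆ J) : Efam I ⊆ Efam J := by
  rintro A ⟨f, hf, ε, hε, rfl⟩
  exact ⟨f, h hf, ε, hε, rfl⟩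

lemma einv_mono {𝒜 ℬ : Set (Set S)} (h : 𝒜 ⊆ ℬ) : Einv 𝒜 ⊆ Einv ℬ :=
  fun f hf => ⟨hf.1, fun ε hε => h (hf.2 ε hε)⟩

lemma subset_einv_efam {I : Set (S →ᵇ ℂ)} (hI : IsIdealLmc I) : I ⊆ Einv (Efam I) :=
  fun f hf => ⟨hI.subset_lmc hf, fun ε hε => ⟨f, hf, ε, hε, rfl⟩⟩

lemma efam_einv_subset (𝒜 : Set (Set S)) : Efam (Einv 𝒜) ⊆ 𝒜 := by
  rintro A ⟨f, hf, ε, hε, rfl⟩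
  exact hf.2 ε hε

/-- `E⁻(E(I))` is an ideal of `Lmc S`. -/
lemma isIdealLmc_einv_efam {I : Set (S →ᵇ ℂ)} (hI : IsIdealLmc I) :
    IsIdealLmc (Einv (Efam I)) where
  subset_lmc := fun f hf => hf.1
  zero_mem := ⟨lmc_zero, fun ε hε => ⟨0, hI.zero_mem, ε, hε, rfl⟩⟩
  add_mem := by
    intro f hf g hg
    refine ⟨lmc_add hf.1 hg.1, fun ε hε => ?_⟩
    obtain ⟨k₁, hk₁, δ₁, hδ₁, h₁⟩ := hf.2 (ε / 2) (by positivity)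
    obtain ⟨k₂, hk₂, δ₂, hδ₂, h₂⟩ := hg.2 (ε / 2) (by positivity)
    have hkI : star k₁ * k₁ + star k₂ * k₂ ∈ I :=
      hI.add_mem _ (hI.mul_mem _ (lmc_star (hI.subset_lmc hk₁)) _ hk₁) _
        (hI.mul_mem _ (lmc_star (hI.subset_lmc hk₂)) _ hk₂)
    have hδ : (0:ℝ) < min δ₁ δ₂ ^ 2 := pow_pos (lt_min hδ₁ hδ₂) 2
    refine efam_superset hI hkI hδ (lmc_add hf.1 hg.1) hε ?_
    intro x hx
    have hxval : ‖(star k₁ * k₁ + star k₂ * k₂) x‖ ≤ min δ₁ δ₂ ^ 2 := hx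
    have hval : (star k₁ * k₁ + star k₂ * k₂) x
        = ((‖k₁ x‖ ^ 2 + ‖k₂ x‖ ^ 2 : ℝ) : ℂ) := by
      simp only [BoundedContinuousFunction.add_apply, BoundedContinuousFunction.mul_apply,
        BoundedContinuousFunction.star_apply]
      rw [show (star (k₁ x) : ℂ) = (starRingEnd ℂ) (k₁ x) from rfl,
        show (star (k₂ x) : ℂ) = (starRingEnd ℂ) (k₂ x) from rfl,
        RCLike.conj_mul, RCLike.conj_mul]
      norm_cast
    rw [hval, Complex.norm_real, Real.norm_eq_abs,
      abs_of_nonneg (by positivity)] at hxval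
    have hmin₁ : min δ₁ δ₂ ≤ δ₁ := min_le_left _ _
    have hmin₂ : min δ₁ δ₂ ≤ δ₂ := min_le_right _ _
    have hmin0 : (0:ℝ) < min δ₁ δ₂ := lt_min hδ₁ hδ₂
    have hx₁ : ‖k₁ x‖ ≤ δ₁ := by nlinarith [norm_nonneg (k₁ x), sq_nonneg (‖k₂ x‖)]
    have hx₂ : ‖k₂ x‖ ≤ δ₂ := by nlinarith [norm_nonneg (k₂ x), sq_nonneg (‖k₁ x‖)]
    have hf2 : x ∈ Eset (ε / 2) f := by rw [h₁]; exact hx₁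
    have hg2 : x ∈ Eset (ε / 2) g := by rw [h₂]; exact hx₂
    show ‖(f + g) x‖ ≤ ε
    calc ‖(f + g) x‖ = ‖f x + g x‖ := rfl
      _ ≤ ‖f x‖ + ‖g x‖ := norm_add_le _ _
      _ ≤ ε / 2 + ε / 2 := add_le_add hf2 hg2
      _ = ε := by ring
  mul_mem := by
    intro w hw g hg
    refine ⟨lmc_mul hw hg.1, fun ε hε => ?_⟩
    have hc : (0:ℝ) < ‖w‖ + 1 := by positivity
    obtain ⟨k, hkI, t, ht, hA⟩ := hg.2 (ε / (‖w‖ + 1)) (by positivity)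
    refine efam_superset hI hkI ht (lmc_mul hw hg.1) hε ?_
    intro x hx
    have hxg : x ∈ Eset (ε / (‖w‖ + 1)) g := by rw [hA]; exact hx
    have hgx : ‖g x‖ ≤ ε / (‖w‖ + 1) := hxg
    show ‖(w * g) x‖ ≤ ε
    calc ‖(w * g) x‖ = ‖w x‖ * ‖g x‖ := norm_mul _ _
      _ ≤ ‖w‖ * (ε / (‖w‖ + 1)) :=
          mul_le_mul (w.norm_coe_le_norm x) hgx (norm_nonneg _) (norm_nonneg _)
      _ ≤ ε := by
          rw [mul_div_assoc']
          rw [div_le_iff₀ hc]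
          nlinarith [norm_nonneg w]

end Stmt12Aux4

theorem stmt12 {S : Type*} [TopologicalSpace S] [T2Space S] [Semigroup S]
    [SemitopologicalSemigroup S] (I : Set (S →ᵇ ℂ)) (hI : IsIdealLmc I) :
    IsEIdeal (Einv (Efam I)) ∧ I ⊆ Einv (Efam I) ∧
    (∀ J : Set (S →ᵇ ℂ), IsEIdeal J → I ⊆ J → Einv (Efam I) ⊆ J) ∧
    (∀ M : Set (S →ᵇ ℂ), IsMaximalIdealLmc M → IsEIdeal M) := by
  have hIdl := isIdealLmc_einv_efam hI
  have hsub := subset_einv_efam hI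
  have hefam_eq : Efam (Einv (Efam I)) = Efam I :=
    subset_antisymm (efam_einv_subset _) (efam_mono hsub)
  refine ⟨⟨hIdl, congrArg Einv hefam_eq⟩, hsub, ?_, ?_⟩
  · intro J hJ hIJ
    have h := einv_mono (efam_mono hIJ)
    rw [hJ.2] at h
    exact h
  · intro M hM
    obtain ⟨hMI, hMne, hmax⟩ := hM
    by_cases hcase : Einv (Efam M) = Lmc S
    · exfalso
      apply hMne
      have h1mem : (1 : S →ᵇ ℂ) ∈ Einv (Efam M) := by rw [hcase]; exact lmc_one
      obtain ⟨k, hkM, δ, hδ, hEq⟩ := h1mem.2 (1 / 2) one_half_pos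
      have hklarge : ∀ x : S, δ < ‖k x‖ := by
        intro x
        by_contra hx
        push_neg at hx
        have hx1 : x ∈ Eset (1 / 2) (1 : S →ᵇ ℂ) := by rw [hEq]; exact hx
        have h1x : ‖(1 : S →ᵇ ℂ) x‖ ≤ 1 / 2 := hx1
        have : ‖(1 : ℂ)‖ ≤ (1 : ℝ) / 2 := h1x
        norm_num at this
      have hden : ∀ z : ℂ, ((max (‖z‖ ^ 2) (δ ^ 2) : ℝ) : ℂ) ≠ 0 := fun z =>
        Complex.ofReal_ne_zero.mpr
          (ne_of_gt (lt_of_lt_of_le (by positivity) (le_max_right _ _)))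
      let φ : C(ℂ, ℂ) :=
        ⟨fun z => star z / ((max (‖z‖ ^ 2) (δ ^ 2) : ℝ) : ℂ),
          continuous_star.div
            (Complex.continuous_ofReal.comp ((continuous_norm.pow 2).max continuous_const))
            hden⟩
      have hone : bcomp φ k * k = 1 := by
        ext x
        have hxk := hklarge x
        have hne : ((‖k x‖ : ℝ) : ℂ) ≠ 0 :=
          Complex.ofReal_ne_zero.mpr (ne_of_gt (lt_trans hδ hxk))
        have hmaxx : max (‖k x‖ ^ 2) (δ ^ 2) = ‖k x‖ ^ 2 := max_eq_left (by nlinarith)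
        show φ (k x) * k x = 1
        simp only [φ, ContinuousMap.coe_mk]
        rw [hmaxx, div_mul_eq_mul_div,
          show (star (k x) : ℂ) = (starRingEnd ℂ) (k x) from rfl, RCLike.conj_mul,
          show ((‖k x‖ ^ 2 : ℝ) : ℂ) = ((‖k x‖ : ℝ) : ℂ) ^ 2 by push_cast; ring]
        exact div_self (pow_ne_zero 2 hne)
      have h1M : (1 : S →ᵇ ℂ) ∈ M :=
        hone ▸ hMI.mul_mem _ (lmc_bcomp (hMI.subset_lmc hkM) φ) _ hkM
      refine subset_antisymm hMI.subset_lmc fun w hw => ?_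
      have hw1 := hMI.mul_mem w hw _ h1M
      rwa [mul_one] at hw1
    · exact ⟨hMI, hmax _ (isIdealLmc_einv_efam hMI) hcase (subset_einv_efam hMI)⟩
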